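/- In the ARROneNS setting, Var[Σᵢ wᵢ] ≤ 2·C₄(G)·μ³ + 6·S₃(G)·μ³ + S₂(G)·μ², where wᵢ = tᵢ − μ²ρ·sᵢ with tᵢ = Σ_{j<k<i} a_{i,j}a_{i,k}·1[(v_j,v_k) ∈ E']·1[(v_i,v_k) ∈ E'], the pair-inclusion events in E' are independent with probability at most μ each, C₄(G) is the number of 4-cycles, S₃(G) the number of 3-stars, and S₂(G) the number of 2-stars of G. -/

import Mathlib

open Real Finset

/-- Ordered pairs `(j,k)` of vertices with `j < k`. -/
abbrev OPair (n : ℕ) := {p : Fin n × Fin n // p.1 < p.2}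

/-- Membership of the unordered pair `{j,k}` in the noisy edge set `E'`. -/
def memE {n : ℕ} (E' : OPair n → Bool) (j k : Fin n) : Bool :=
  if h : j < k then E' ⟨(j, k), h⟩
  else if h' : k < j then E' ⟨(k, j), h'⟩ else false

/-- Inclusion probability of pair `p` in the noisy edge set. -/
noncomputable def incProb (n : ℕ) (a : Fin n → Fin n → Bool) (μ ρ : ℝ)
    (p : OPair n) : ℝ :=
  if a p.1.1 p.1.2 then μ else μ * ρ

/-- Probability of a noisy edge configuration `E'` (independent inclusions). -/
noncomputable def confProb (n : ℕ) (a : Fin n → Fin n → Bool) (μ ρ : ℝ)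
    (E' : OPair n → Bool) : ℝ :=
  ∏ p : OPair n, if E' p then incProb n a μ ρ p else 1 - incProb n a μ ρ p

/-- `tᵢ` for `ARROneNS`. -/
def tCountOne (n : ℕ) (a : Fin n → Fin n → Bool) (E' : OPair n → Bool)
    (i : Fin n) : ℝ :=
  ∑ p : OPair n,
    if p.1.2 < i ∧ a i p.1.1 = true ∧ a i p.1.2 = true ∧
        memE E' p.1.1 p.1.2 = true ∧ memE E' p.1.2 i = true then 1 else 0

/-- `sᵢ`. -/
def sCount (n : ℕ) (a : Fin n → Fin n → Bool) (i : Fin n) : ℝ :=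
  ∑ p : OPair n, if p.1.2 < i ∧ a i p.1.1 = true ∧ a i p.1.2 = true then 1 else 0

/-- `Σᵢ wᵢ` for `ARROneNS`, with `wᵢ = tᵢ − μ²ρ sᵢ`. -/
noncomputable def wSumOne (n : ℕ) (a : Fin n → Fin n → Bool) (μ ρ : ℝ)
    (E' : OPair n → Bool) : ℝ :=
  ∑ i : Fin n, (tCountOne n a E' i - μ ^ 2 * ρ * sCount n a i)

/-- Degree of vertex `v`. -/
def degCount (n : ℕ) (a : Fin n → Fin n → Bool) (v : Fin n) : ℕ :=
  (Finset.univ.filter (fun u : Fin n => a v u = true)).card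

/-- Number of `k`-stars. -/
def kStars (n : ℕ) (a : Fin n → Fin n → Bool) (k : ℕ) : ℕ :=
  ∑ v : Fin n, Nat.choose (degCount n a v) k

/-- Number of 4-cycles (canonical representative count). -/
def fourCycles (n : ℕ) (a : Fin n → Fin n → Bool) : ℕ :=
  (Finset.univ.filter (fun t : Fin n × Fin n × Fin n × Fin n =>
    t.1 < t.2.1 ∧ t.2.1 < t.2.2.2 ∧ t.1 < t.2.2.1 ∧
    t.2.1 ≠ t.2.2.1 ∧ t.2.2.2 ≠ t.2.2.1 ∧
    a t.1 t.2.1 = true ∧ a t.2.1 t.2.2.1 = true ∧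
    a t.2.2.1 t.2.2.2 = true ∧ a t.2.2.2 t.1 = true)).card


namespace ARV

variable {n : ℕ}

/-- Indicator that pair `e` is in `E'`. -/
def Xe (E' : OPair n → Bool) (e : OPair n) : ℝ := if E' e then 1 else 0

/-- Index set of triples `(i,(j,k))` with `j<k<i`, `a i j`, `a i k`. -/
def Aset (n : ℕ) (a : Fin n → Fin n → Bool) : Finset (Fin n × OPair n) :=
  Finset.univ.filter (fun α => α.2.1.2 < α.1 ∧ a α.1 α.2.1.1 = true ∧ a α.1 α.2.1.2 = true)

/-- The second edge `{k,i}` of the triple `α = (i,(j,k))`. -/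
def e2 (α : Fin n × OPair n) : OPair n :=
  if h : α.2.1.2 < α.1 then ⟨(α.2.1.2, α.1), h⟩ else α.2

/-- The two edges of a triple. -/
def Eset (α : Fin n × OPair n) : Finset (OPair n) := {α.2, e2 α}

lemma mem_Aset {a : Fin n → Fin n → Bool} {α : Fin n × OPair n} :
    α ∈ Aset n a ↔ α.2.1.2 < α.1 ∧ a α.1 α.2.1.1 = true ∧ a α.1 α.2.1.2 = true := by
  simp [Aset]

lemma e2_eq {α : Fin n × OPair n} (h : α.2.1.2 < α.1) :
    e2 α = ⟨(α.2.1.2, α.1), h⟩ := dif_pos h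

lemma e1_ne_e2 {α : Fin n × OPair n} (h : α.2.1.2 < α.1) : α.2 ≠ e2 α := by
  rw [e2_eq h]
  intro hc
  have h1 : α.2.1.1 = α.2.1.2 := congrArg (fun e : OPair n => e.1.1) hc
  exact absurd α.2.2 (by rw [h1]; exact lt_irrefl _)

lemma prodX (E' : OPair n → Bool) (S : Finset (OPair n)) :
    ∏ e ∈ S, Xe E' e = if ∀ e ∈ S, E' e = true then 1 else 0 := by
  classical
  unfold Xe
  induction S using Finset.induction with
  | empty => simp
  | insert e s h ih =>
    rw [Finset.prod_insert h, ih]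
    by_cases he : E' e <;> simp [he]

lemma moment (a : Fin n → Fin n → Bool) (μ ρ : ℝ) (S : Finset (OPair n)) :
    ∑ E' : OPair n → Bool, confProb n a μ ρ E' * ∏ e ∈ S, Xe E' e
      = ∏ e ∈ S, incProb n a μ ρ e := by
  classical
  have step1 : ∀ E' : OPair n → Bool,
      confProb n a μ ρ E' * ∏ e ∈ S, Xe E' e
        = ∏ p : OPair n,
            ((if E' p then incProb n a μ ρ p else 1 - incProb n a μ ρ p) *
              (if p ∈ S then (if E' p then (1:ℝ) else 0) else 1)) := by
    intro E'
    rw [Finset.prod_mul_distrib]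
    congr 1
    rw [Finset.prod_ite_mem, Finset.univ_inter]
    simp [Xe]
  calc ∑ E' : OPair n → Bool, confProb n a μ ρ E' * ∏ e ∈ S, Xe E' e
      = ∑ E' : OPair n → Bool, ∏ p : OPair n,
          ((if E' p then incProb n a μ ρ p else 1 - incProb n a μ ρ p) *
            (if p ∈ S then (if E' p then (1:ℝ) else 0) else 1)) :=
        Finset.sum_congr rfl fun E' _ => step1 E'
    _ = ∏ p : OPair n, ∑ b : Bool,
          ((if b then incProb n a μ ρ p else 1 - incProb n a μ ρ p) *
            (if p ∈ S then (if b then (1:ℝ) else 0) else 1)) := by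
        rw [Finset.prod_univ_sum]
        rw [Fintype.piFinset_univ]
    _ = ∏ p : OPair n, (if p ∈ S then incProb n a μ ρ p else 1) := by
        refine Finset.prod_congr rfl fun p _ => ?_
        by_cases hp : p ∈ S <;> simp [hp]
    _ = ∏ e ∈ S, incProb n a μ ρ e := by
        rw [Finset.prod_ite_mem, Finset.univ_inter]


lemma sum_confProb (a : Fin n → Fin n → Bool) (μ ρ : ℝ) :
    ∑ E' : OPair n → Bool, confProb n a μ ρ E' = 1 := by
  have h := moment (n := n) a μ ρ ∅
  simpa using h

lemma wsum_eq (a : Fin n → Fin n → Bool) (μ ρ : ℝ) (E' : OPair n → Bool) :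
    wSumOne n a μ ρ E' =
      (∑ α ∈ Aset n a, Xe E' α.2 * Xe E' (e2 α)) - μ ^ 2 * ρ * ((Aset n a).card : ℝ) := by
  classical
  have hs : ∑ i : Fin n, sCount n a i = ((Aset n a).card : ℝ) := by
    rw [Aset, ← Finset.sum_boole, Fintype.sum_prod_type]
    rfl
  have ht : ∑ i : Fin n, tCountOne n a E' i
      = ∑ α ∈ Aset n a, Xe E' α.2 * Xe E' (e2 α) := by
    rw [Aset, Finset.sum_filter, Fintype.sum_prod_type]
    unfold tCountOne
    refine Finset.sum_congr rfl fun i _ => Finset.sum_congr rfl fun p _ => ?_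
    by_cases hb : (p.1.2 < i ∧ a i p.1.1 = true ∧ a i p.1.2 = true)
    · obtain ⟨h1, h2, h3⟩ := hb
      have hm1 : memE E' p.1.1 p.1.2 = E' p := by
        rw [memE, dif_pos p.2]
      have hm2 : memE E' p.1.2 i = E' (e2 (i, p)) := by
        rw [memE, dif_pos h1, e2_eq (α := (i, p)) h1]
      rw [hm1, hm2]
      by_cases hp : E' p <;> by_cases he : E' (e2 (i, p)) <;>
        simp [Xe, h1, h2, h3, hp, he]
    · rw [if_neg fun h => hb ⟨h.1, h.2.1, h.2.2.1⟩, if_neg hb]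
  unfold wSumOne
  rw [Finset.sum_sub_distrib, ht, ← Finset.mul_sum, hs]

lemma Ymul (E' : OPair n → Bool) (α β : Fin n × OPair n) :
    (Xe E' α.2 * Xe E' (e2 α)) * (Xe E' β.2 * Xe E' (e2 β))
      = ∏ e ∈ Eset α ∪ Eset β, Xe E' e := by
  rw [prodX]
  unfold Xe Eset
  by_cases h1 : E' α.2 <;> by_cases h2 : E' (e2 α) <;> by_cases h3 : E' β.2 <;>
    by_cases h4 : E' (e2 β) <;> simp [h1, h2, h3, h4]

/-- covariance of the pair `(α, β)` -/
noncomputable def cov (n : ℕ) (a : Fin n → Fin n → Bool) (μ ρ : ℝ)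
    (α β : Fin n × OPair n) : ℝ :=
  (∏ e ∈ Eset α ∪ Eset β, incProb n a μ ρ e)
    - (incProb n a μ ρ α.2 * incProb n a μ ρ (e2 α))
      * (incProb n a μ ρ β.2 * incProb n a μ ρ (e2 β))

set_option maxHeartbeats 2000000 in
lemma var_eq (a : Fin n → Fin n → Bool) (μ ρ : ℝ) :
    (∑ E' : OPair n → Bool,
        confProb n a μ ρ E' *
          (wSumOne n a μ ρ E'
            - ∑ E'' : OPair n → Bool,
                confProb n a μ ρ E'' * wSumOne n a μ ρ E'') ^ 2)
      = ∑ α ∈ Aset n a, ∑ β ∈ Aset n a, cov n a μ ρ α β := by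
  classical
  set A := Aset n a with hA
  set P : (OPair n → Bool) → ℝ := confProb n a μ ρ with hP
  set g : (OPair n → Bool) → ℝ := fun E' => ∑ α ∈ A, Xe E' α.2 * Xe E' (e2 α) with hg
  set C : ℝ := μ ^ 2 * ρ * (A.card : ℝ) with hC
  have hPsum : ∑ E' : OPair n → Bool, P E' = 1 := sum_confProb a μ ρ
  set m : ℝ := ∑ E' : OPair n → Bool, P E' * g E' with hm
  have hw : ∀ E', wSumOne n a μ ρ E' = g E' - C := wsum_eq a μ ρ
  have hmean : ∑ E'' : OPair n → Bool, P E'' * wSumOne n a μ ρ E'' = m - C := by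
    simp only [hw]
    have h2 : ∀ E' : OPair n → Bool, P E' * (g E' - C) = P E' * g E' - C * P E' :=
      fun E' => by ring
    rw [Finset.sum_congr rfl fun E' _ => h2 E', Finset.sum_sub_distrib,
      ← Finset.mul_sum, hPsum, mul_one, ← hm]
  have hEY : ∀ α β : Fin n × OPair n,
      ∑ E' : OPair n → Bool,
        P E' * ((Xe E' α.2 * Xe E' (e2 α)) * (Xe E' β.2 * Xe E' (e2 β)))
      = ∏ e ∈ Eset α ∪ Eset β, incProb n a μ ρ e := by
    intro α β
    rw [← moment a μ ρ (Eset α ∪ Eset β)]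
    exact Finset.sum_congr rfl fun E' _ => by rw [Ymul]
  have hEy : ∀ α ∈ A, ∑ E' : OPair n → Bool, P E' * (Xe E' α.2 * Xe E' (e2 α))
      = incProb n a μ ρ α.2 * incProb n a μ ρ (e2 α) := by
    intro α hα
    have hne : α.2 ≠ e2 α := e1_ne_e2 (mem_Aset.mp hα).1
    have hmom := moment a μ ρ ({α.2, e2 α})
    simp only [Finset.prod_pair hne] at hmom
    exact hmom
  have hm2 : m = ∑ α ∈ A, incProb n a μ ρ α.2 * incProb n a μ ρ (e2 α) := by
    rw [hm]
    have h3 : ∀ E' : OPair n → Bool,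
        P E' * g E' = ∑ α ∈ A, P E' * (Xe E' α.2 * Xe E' (e2 α)) :=
      fun E' => by rw [hg]; exact Finset.mul_sum _ _ _
    rw [Finset.sum_congr rfl fun E' _ => h3 E', Finset.sum_comm]
    exact Finset.sum_congr rfl fun α hα => hEy α hα
  have hg2 : ∑ E' : OPair n → Bool, P E' * (g E') ^ 2
      = ∑ α ∈ A, ∑ β ∈ A, ∏ e ∈ Eset α ∪ Eset β, incProb n a μ ρ e := by
    have h4 : ∀ E' : OPair n → Bool, P E' * (g E') ^ 2
        = ∑ α ∈ A, ∑ β ∈ A,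
            P E' * ((Xe E' α.2 * Xe E' (e2 α)) * (Xe E' β.2 * Xe E' (e2 β))) := by
      intro E'
      rw [hg, sq, Finset.sum_mul_sum, Finset.mul_sum]
      exact Finset.sum_congr rfl fun α _ => Finset.mul_sum _ _ _
    rw [Finset.sum_congr rfl fun E' _ => h4 E', Finset.sum_comm]
    refine Finset.sum_congr rfl fun α _ => ?_
    rw [Finset.sum_comm]
    exact Finset.sum_congr rfl fun β _ => hEY α β
  calc ∑ E' : OPair n → Bool,
        P E' * (wSumOne n a μ ρ E'
          - ∑ E'' : OPair n → Bool, P E'' * wSumOne n a μ ρ E'') ^ 2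
      = ∑ E' : OPair n → Bool, P E' * (g E' - m) ^ 2 := by
        refine Finset.sum_congr rfl fun E' _ => ?_
        rw [hw E', hmean]
        congr 1
        ring
    _ = (∑ E' : OPair n → Bool, P E' * (g E') ^ 2) - m ^ 2 := by
        have hexp : ∀ E' : OPair n → Bool, P E' * (g E' - m) ^ 2
            = (P E' * g E' ^ 2 + m ^ 2 * P E') - 2 * m * (P E' * g E') :=
          fun E' => by ring
        rw [Finset.sum_congr rfl fun E' _ => hexp E', Finset.sum_sub_distrib,
          Finset.sum_add_distrib, ← Finset.mul_sum, ← Finset.mul_sum, hPsum, ← hm]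
        ring
    _ = (∑ α ∈ A, ∑ β ∈ A, ∏ e ∈ Eset α ∪ Eset β, incProb n a μ ρ e)
        - ∑ α ∈ A, ∑ β ∈ A,
            (incProb n a μ ρ α.2 * incProb n a μ ρ (e2 α))
              * (incProb n a μ ρ β.2 * incProb n a μ ρ (e2 β)) := by
        rw [hg2, hm2, sq, Finset.sum_mul_sum]
    _ = ∑ α ∈ A, ∑ β ∈ A, cov n a μ ρ α β := by
        rw [← Finset.sum_sub_distrib]
        refine Finset.sum_congr rfl fun α _ => ?_
        rw [← Finset.sum_sub_distrib]
        rfl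


lemma incProb_nonneg {a : Fin n → Fin n → Bool} {μ ρ : ℝ} (hμ0 : 0 ≤ μ) (hρ0 : 0 ≤ ρ)
    (e : OPair n) : 0 ≤ incProb n a μ ρ e := by
  unfold incProb; split
  · exact hμ0
  · exact mul_nonneg hμ0 hρ0

lemma incProb_le {a : Fin n → Fin n → Bool} {μ ρ : ℝ} (hμ0 : 0 ≤ μ) (hρ1 : ρ ≤ 1)
    (e : OPair n) : incProb n a μ ρ e ≤ μ := by
  unfold incProb; split
  · exact le_rfl
  · exact mul_le_of_le_one_right hμ0 hρ1

lemma prod_Eset {a : Fin n → Fin n → Bool} {α : Fin n × OPair n} (hα : α ∈ Aset n a)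
    (f : OPair n → ℝ) : ∏ e ∈ Eset α, f e = f α.2 * f (e2 α) :=
  Finset.prod_pair (e1_ne_e2 (mem_Aset.mp hα).1)

lemma cov_of_disjoint {a : Fin n → Fin n → Bool} {μ ρ : ℝ} {α β : Fin n × OPair n}
    (hα : α ∈ Aset n a) (hβ : β ∈ Aset n a) (hdis : Disjoint (Eset α) (Eset β)) :
    cov n a μ ρ α β = 0 := by
  unfold cov
  rw [Finset.prod_union hdis, prod_Eset hα, prod_Eset hβ, sub_self]

lemma cov_le_sq {a : Fin n → Fin n → Bool} {μ ρ : ℝ} (hμ0 : 0 ≤ μ) (hρ0 : 0 ≤ ρ)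
    (hρ1 : ρ ≤ 1) {α : Fin n × OPair n} (hα : α ∈ Aset n a) :
    cov n a μ ρ α α ≤ μ ^ 2 := by
  unfold cov
  rw [Finset.union_self, prod_Eset hα]
  have h1 := incProb_nonneg (a := a) hμ0 hρ0 α.2
  have h2 := incProb_nonneg (a := a) hμ0 hρ0 (e2 α)
  have h3 := incProb_le (a := a) (ρ := ρ) hμ0 hρ1 α.2
  have h4 := incProb_le (a := a) (ρ := ρ) hμ0 hρ1 (e2 α)
  nlinarith [mul_nonneg h1 h2, mul_nonneg (mul_nonneg h1 h2) (mul_nonneg h1 h2)]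

lemma card_union_ge {a : Fin n → Fin n → Bool} {α β : Fin n × OPair n}
    (hα : α ∈ Aset n a) (hβ : β ∈ Aset n a) (hne : α ≠ β) :
    3 ≤ (Eset α ∪ Eset β).card := by
  classical
  by_contra hcon
  push_neg at hcon
  have hkA : α.2.1.2 < α.1 := (mem_Aset.mp hα).1
  have hkB : β.2.1.2 < β.1 := (mem_Aset.mp hβ).1
  have hcA : (Eset α).card = 2 := Finset.card_pair (e1_ne_e2 hkA)
  have hsub : Eset α ⊆ Eset α ∪ Eset β := Finset.subset_union_left
  have hle : (Eset α ∪ Eset β).card ≤ (Eset α).card := by rw [hcA]; omega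
  have hEq : Eset α = Eset α ∪ Eset β := Finset.eq_of_subset_of_card_le hsub hle
  have hBsub : Eset β ⊆ Eset α := by
    rw [hEq]; exact Finset.subset_union_right
  have hb1 : β.2 ∈ Eset α := hBsub (by simp [Eset])
  have hb2 : e2 β ∈ Eset α := hBsub (by simp [Eset])
  simp only [Eset, Finset.mem_insert, Finset.mem_singleton] at hb1 hb2
  rw [e2_eq hkA] at hb1 hb2
  rw [e2_eq hkB] at hb2
  have hjkA : α.2.1.1 < α.2.1.2 := α.2.2
  have hjkB : β.2.1.1 < β.2.1.2 := β.2.2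
  simp only [Subtype.ext_iff, Prod.ext_iff] at hb1 hb2
  rw [Fin.lt_def] at hkA hkB hjkA hjkB
  rcases hb1 with h1 | h1 <;> rcases hb2 with h2 | h2
  · -- β.2 = α.2 and e2 β = α.2 : impossible since k_B = k_A yet k_B = j_A
    simp only [Fin.ext_iff] at h1 h2
    omega
  · -- β.2 = α.2 and e2 β = e2 α : then α = β
    exact hne (Prod.ext h2.2.symm (Subtype.ext (Prod.ext h1.1.symm h1.2.symm)))
  · simp only [Fin.ext_iff] at h1 h2
    omega
  · simp only [Fin.ext_iff] at h1 h2
    omega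

lemma cov_le_cube {a : Fin n → Fin n → Bool} {μ ρ : ℝ} (hμ0 : 0 ≤ μ) (hμ1 : μ ≤ 1)
    (hρ0 : 0 ≤ ρ) (hρ1 : ρ ≤ 1) {α β : Fin n × OPair n}
    (hα : α ∈ Aset n a) (hβ : β ∈ Aset n a) (hne : α ≠ β) :
    cov n a μ ρ α β ≤ μ ^ 3 := by
  unfold cov
  have h1 : (∏ e ∈ Eset α ∪ Eset β, incProb n a μ ρ e)
      ≤ μ ^ (Eset α ∪ Eset β).card := by
    calc ∏ e ∈ Eset α ∪ Eset β, incProb n a μ ρ e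
        ≤ ∏ _e ∈ Eset α ∪ Eset β, μ :=
          Finset.prod_le_prod (fun e _ => incProb_nonneg hμ0 hρ0 e)
            (fun e _ => incProb_le hμ0 hρ1 e)
      _ = μ ^ (Eset α ∪ Eset β).card := Finset.prod_const μ
  have h2 : μ ^ (Eset α ∪ Eset β).card ≤ μ ^ 3 :=
    pow_le_pow_of_le_one hμ0 hμ1 (card_union_ge hα hβ hne)
  have h3 : 0 ≤ (incProb n a μ ρ α.2 * incProb n a μ ρ (e2 α))
      * (incProb n a μ ρ β.2 * incProb n a μ ρ (e2 β)) :=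
    mul_nonneg (mul_nonneg (incProb_nonneg hμ0 hρ0 _) (incProb_nonneg hμ0 hρ0 _))
      (mul_nonneg (incProb_nonneg hμ0 hρ0 _) (incProb_nonneg hμ0 hρ0 _))
  linarith

lemma pair_eq {N : ℕ} {x y x' y' : Fin N} (hxy : x < y) (hxy' : x' < y')
    (h : ({x, y} : Finset (Fin N)) = {x', y'}) : x = x' ∧ y = y' := by
  have m1 : x ∈ ({x', y'} : Finset (Fin N)) := by rw [← h]; simp
  have m2 : y ∈ ({x', y'} : Finset (Fin N)) := by rw [← h]; simp
  simp only [Finset.mem_insert, Finset.mem_singleton] at m1 m2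
  rw [Fin.lt_def] at hxy hxy'
  simp only [Fin.ext_iff] at m1 m2 ⊢
  omega

lemma triple_eq {N : ℕ} {x y z x' y' z' : Fin N} (hxy : x < y) (hyz : y < z)
    (hxy' : x' < y') (hyz' : y' < z')
    (h : ({x, y, z} : Finset (Fin N)) = {x', y', z'}) :
    x = x' ∧ y = y' ∧ z = z' := by
  have m1 : x ∈ ({x', y', z'} : Finset (Fin N)) := by rw [← h]; simp
  have m2 : y ∈ ({x', y', z'} : Finset (Fin N)) := by rw [← h]; simp
  have m3 : z ∈ ({x', y', z'} : Finset (Fin N)) := by rw [← h]; simp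
  simp only [Finset.mem_insert, Finset.mem_singleton] at m1 m2 m3
  rw [Fin.lt_def] at hxy hyz hxy' hyz'
  simp only [Fin.ext_iff] at m1 m2 m3 ⊢
  omega

lemma card_triple {N : ℕ} {x y z : Fin N} (hxy : x < y) (hyz : y < z) :
    ({x, y, z} : Finset (Fin N)).card = 3 := by
  rw [Finset.card_insert_of_notMem (by
      simp only [Finset.mem_insert, Finset.mem_singleton]
      push_neg
      exact ⟨ne_of_lt hxy, ne_of_lt (hxy.trans hyz)⟩),
    Finset.card_insert_of_notMem (by simp [ne_of_lt hyz]),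
    Finset.card_singleton]

/-- Neighbours of `v`. -/
def NBors (n : ℕ) (a : Fin n → Fin n → Bool) (v : Fin n) : Finset (Fin n) :=
  Finset.univ.filter (fun u => a v u = true)

/-- Target for star counting. -/
def starTarget (n : ℕ) (a : Fin n → Fin n → Bool) (k : ℕ) :
    Finset ((_ : Fin n) × Finset (Fin n)) :=
  Finset.univ.sigma (fun v => (NBors n a v).powersetCard k)

lemma card_starTarget (a : Fin n → Fin n → Bool) (k : ℕ) :
    (starTarget n a k).card = kStars n a k := by
  rw [starTarget, Finset.card_sigma]
  unfold kStars degCount NBors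
  exact Finset.sum_congr rfl fun v _ => Finset.card_powersetCard _ _

lemma mem_starTarget {a : Fin n → Fin n → Bool} {k : ℕ} {v : Fin n}
    {s : Finset (Fin n)} :
    (⟨v, s⟩ : (_ : Fin n) × Finset (Fin n)) ∈ starTarget n a k
      ↔ s ⊆ NBors n a v ∧ s.card = k := by
  simp [starTarget, Finset.mem_sigma, Finset.mem_powersetCard]

lemma card_Aset_le (a : Fin n → Fin n → Bool) :
    (Aset n a).card ≤ kStars n a 2 := by
  classical
  rw [← card_starTarget a 2]
  apply Finset.card_le_card_of_injOn
    (fun α => (⟨α.1, {α.2.1.1, α.2.1.2}⟩ : (_ : Fin n) × Finset (Fin n)))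
  · intro α hα
    obtain ⟨hk, h2, h3⟩ := mem_Aset.mp hα
    simp only [Finset.mem_coe]
    rw [mem_starTarget]
    refine ⟨?_, Finset.card_pair (ne_of_lt α.2.2)⟩
    intro u hu
    simp only [Finset.mem_insert, Finset.mem_singleton] at hu
    rcases hu with h | h <;> simp [NBors, h, h2, h3]
  · intro x hx y hy hxy
    simp only [Sigma.mk.inj_iff, heq_eq_eq] at hxy
    obtain ⟨h1, h2⟩ := hxy
    obtain ⟨hj, hk⟩ := pair_eq x.2.2 y.2.2 h2
    exact Prod.ext h1 (Subtype.ext (Prod.ext hj hk))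

section counting
variable {a : Fin n → Fin n → Bool}

lemma eq_of_eq_parts {x y : Fin n × OPair n} (h1 : x.1 = y.1)
    (hj : x.2.1.1 = y.2.1.1) (hk : x.2.1.2 = y.2.1.2) : x = y :=
  Prod.ext h1 (Subtype.ext (Prod.ext hj hk))

lemma card_D1 (hsymm : ∀ i j, a i j = a j i) :
    (((Aset n a) ×ˢ (Aset n a)).filter
        (fun x => x.1.2 = x.2.2 ∧ x.1 ≠ x.2)).card
      ≤ 2 * fourCycles n a := by
  classical
  have htarget : ((Finset.univ.filter (fun t : Fin n × Fin n × Fin n × Fin n =>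
      t.1 < t.2.1 ∧ t.2.1 < t.2.2.2 ∧ t.1 < t.2.2.1 ∧
      t.2.1 ≠ t.2.2.1 ∧ t.2.2.2 ≠ t.2.2.1 ∧
      a t.1 t.2.1 = true ∧ a t.2.1 t.2.2.1 = true ∧
      a t.2.2.1 t.2.2.2 = true ∧ a t.2.2.2 t.1 = true)) ×ˢ
        (Finset.univ : Finset Bool)).card = 2 * fourCycles n a := by
    rw [Finset.card_product, fourCycles]
    simp [mul_comm]
  rw [← htarget]
  apply Finset.card_le_card_of_injOn (fun x =>
    (if x.1.1 < x.2.1 then ((x.1.2.1.1, x.1.1, x.1.2.1.2, x.2.1), true)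
     else ((x.1.2.1.1, x.2.1, x.1.2.1.2, x.1.1), false)))
  · intro x hx
    simp only [Finset.mem_coe] at hx ⊢
    simp only [Finset.mem_filter, Finset.mem_product] at hx
    obtain ⟨⟨hxA, hxB⟩, h12, hne⟩ := hx
    obtain ⟨hkA, haA1, haA2⟩ := mem_Aset.mp hxA
    obtain ⟨hkB, haB1, haB2⟩ := mem_Aset.mp hxB
    have hjk : x.1.2.1.1 < x.1.2.1.2 := x.1.2.2
    have hj' : x.2.2.1.1 = x.1.2.1.1 := by rw [h12]
    have hk' : x.2.2.1.2 = x.1.2.1.2 := by rw [h12]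
    rw [hj'] at haB1
    rw [hk'] at haB2 hkB
    have hii : x.1.1 ≠ x.2.1 := by
      intro hc
      exact hne (eq_of_eq_parts hc (by rw [h12]) (by rw [h12]))
    by_cases hlt : x.1.1 < x.2.1 <;>
      [rw [if_pos hlt]; rw [if_neg hlt]] <;>
      simp only [Finset.mem_product, Finset.mem_univ, and_true,
        Finset.mem_filter, true_and]
    · refine ⟨hjk.trans hkA, hlt, hjk, (ne_of_lt hkA).symm, (ne_of_lt hkB).symm, ?_, ?_, ?_, ?_⟩
      · rw [hsymm]; exact haA1
      · exact haA2
      · rw [hsymm]; exact haB2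
      · exact haB1
    · have hlt' : x.2.1 < x.1.1 := lt_of_le_of_ne (not_lt.mp hlt) (Ne.symm hii)
      refine ⟨hjk.trans hkB, hlt', hjk, (ne_of_lt hkB).symm, (ne_of_lt hkA).symm, ?_, ?_, ?_, ?_⟩
      · rw [hsymm]; exact haB1
      · exact haB2
      · rw [hsymm]; exact haA2
      · exact haA1
  · intro x hx y hy hxy
    simp only [Finset.mem_coe, Finset.mem_filter, Finset.mem_product] at hx hy
    obtain ⟨⟨hxA, hxB⟩, hx12, hxne⟩ := hx
    obtain ⟨⟨hyA, hyB⟩, hy12, hyne⟩ := hy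
    by_cases h1 : x.1.1 < x.2.1 <;> by_cases h2 : y.1.1 < y.2.1 <;>
      simp only [h1, h2, if_true, if_false, Prod.mk.injEq, reduceIte] at hxy
    · obtain ⟨⟨hj, hi, hk, hi'⟩, -⟩ := hxy
      refine Prod.ext (eq_of_eq_parts hi hj hk)
        (eq_of_eq_parts hi' (by rw [← hx12, ← hy12, hj]) (by rw [← hx12, ← hy12, hk]))
    · exact absurd hxy.2 (by simp)
    · exact absurd hxy.2 (by simp)
    · obtain ⟨⟨hj, hi', hk, hi⟩, -⟩ := hxy
      refine Prod.ext (eq_of_eq_parts hi hj hk)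
        (eq_of_eq_parts hi' (by rw [← hx12, ← hy12, hj]) (by rw [← hx12, ← hy12, hk]))

end counting


lemma card_D2 :
    (((Aset n a) ×ˢ (Aset n a)).filter
        (fun x => e2 x.1 = e2 x.2 ∧ x.1 ≠ x.2)).card
      ≤ 2 * kStars n a 3 := by
  classical
  have htarget : ((starTarget n a 3) ×ˢ (Finset.univ : Finset Bool)).card
      = 2 * kStars n a 3 := by
    rw [Finset.card_product, card_starTarget]
    simp [mul_comm]
  rw [← htarget]
  apply Finset.card_le_card_of_injOn (fun x =>
    (if x.1.2.1.1 < x.2.2.1.1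
      then ((⟨x.1.1, {x.1.2.1.1, x.2.2.1.1, x.1.2.1.2}⟩ :
              (_ : Fin n) × Finset (Fin n)), true)
      else ((⟨x.1.1, {x.2.2.1.1, x.1.2.1.1, x.1.2.1.2}⟩ :
              (_ : Fin n) × Finset (Fin n)), false)))
  · intro x hx
    simp only [Finset.mem_coe] at hx ⊢
    simp only [Finset.mem_filter, Finset.mem_product] at hx
    obtain ⟨⟨hxA, hxB⟩, he, hne⟩ := hx
    obtain ⟨hkA, haA1, haA2⟩ := mem_Aset.mp hxA
    obtain ⟨hkB, haB1, haB2⟩ := mem_Aset.mp hxB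
    rw [e2_eq hkA, e2_eq hkB] at he
    simp only [Subtype.mk.injEq, Prod.mk.injEq] at he
    obtain ⟨hek, hei⟩ := he
    have hjkA : x.1.2.1.1 < x.1.2.1.2 := x.1.2.2
    have hjkB : x.2.2.1.1 < x.1.2.1.2 := hek ▸ x.2.2.2
    have hjj : x.1.2.1.1 ≠ x.2.2.1.1 := by
      intro hc
      exact hne (eq_of_eq_parts hei hc hek)
    have hmem1 : x.1.2.1.1 ∈ NBors n a x.1.1 := by simp [NBors, haA1]
    have hmem2 : x.2.2.1.1 ∈ NBors n a x.1.1 := by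
      simp [NBors, hei ▸ haB1]
    have hmem3 : x.1.2.1.2 ∈ NBors n a x.1.1 := by simp [NBors, haA2]
    by_cases hlt : x.1.2.1.1 < x.2.2.1.1 <;>
      [rw [if_pos hlt]; rw [if_neg hlt]] <;>
      simp only [Finset.mem_product, Finset.mem_univ, and_true] <;>
      rw [mem_starTarget]
    · refine ⟨?_, card_triple hlt hjkB⟩
      intro u hu
      simp only [Finset.mem_insert, Finset.mem_singleton] at hu
      rcases hu with h | h | h <;> rw [h] <;> assumption
    · have hlt' : x.2.2.1.1 < x.1.2.1.1 :=
        lt_of_le_of_ne (not_lt.mp hlt) hjj.symm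
      refine ⟨?_, card_triple hlt' hjkA⟩
      intro u hu
      simp only [Finset.mem_insert, Finset.mem_singleton] at hu
      rcases hu with h | h | h <;> rw [h] <;> assumption
  · intro x hx y hy hxy
    simp only [Finset.mem_coe, Finset.mem_filter, Finset.mem_product] at hx hy
    obtain ⟨⟨hxA, hxB⟩, hex, hxne⟩ := hx
    obtain ⟨⟨hyA, hyB⟩, hey, hyne⟩ := hy
    obtain ⟨hkAx, -, -⟩ := mem_Aset.mp hxA
    obtain ⟨hkBx, -, -⟩ := mem_Aset.mp hxB
    obtain ⟨hkAy, -, -⟩ := mem_Aset.mp hyA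
    obtain ⟨hkBy, -, -⟩ := mem_Aset.mp hyB
    rw [e2_eq hkAx, e2_eq hkBx] at hex
    rw [e2_eq hkAy, e2_eq hkBy] at hey
    simp only [Subtype.mk.injEq, Prod.mk.injEq] at hex hey
    obtain ⟨hekx, heix⟩ := hex
    obtain ⟨heky, heiy⟩ := hey
    have hjkAx : x.1.2.1.1 < x.1.2.1.2 := x.1.2.2
    have hjkBx : x.2.2.1.1 < x.1.2.1.2 := hekx ▸ x.2.2.2
    have hjkAy : y.1.2.1.1 < y.1.2.1.2 := y.1.2.2
    have hjkBy : y.2.2.1.1 < y.1.2.1.2 := heky ▸ y.2.2.2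
    by_cases h1 : x.1.2.1.1 < x.2.2.1.1 <;> by_cases h2 : y.1.2.1.1 < y.2.2.1.1 <;>
      simp only [h1, h2, if_true, if_false, reduceIte, Prod.mk.injEq,
        Sigma.mk.inj_iff, heq_eq_eq] at hxy
    · obtain ⟨⟨hi, hset⟩, -⟩ := hxy
      obtain ⟨hja, hjb, hk⟩ := triple_eq h1 hjkBx h2 hjkBy hset
      refine Prod.ext (eq_of_eq_parts hi hja hk)
        (eq_of_eq_parts (heix.symm.trans (hi.trans heiy)) hjb
          (hekx.symm.trans (hk.trans heky)))
    · exact absurd hxy.2 (by simp)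
    · exact absurd hxy.2 (by simp)
    · have h1' : x.2.2.1.1 < x.1.2.1.1 :=
        lt_of_le_of_ne (not_lt.mp h1)
          (fun hc => hxne (eq_of_eq_parts heix hc.symm hekx))
      have h2' : y.2.2.1.1 < y.1.2.1.1 :=
        lt_of_le_of_ne (not_lt.mp h2)
          (fun hc => hyne (eq_of_eq_parts heiy hc.symm heky))
      obtain ⟨⟨hi, hset⟩, -⟩ := hxy
      obtain ⟨hjb, hja, hk⟩ := triple_eq h1' hjkAx h2' hjkAy hset
      refine Prod.ext (eq_of_eq_parts hi hja hk)
        (eq_of_eq_parts (heix.symm.trans (hi.trans heiy)) hjb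
          (hekx.symm.trans (hk.trans heky)))

lemma card_D3 (hsymm : ∀ i j, a i j = a j i) :
    (((Aset n a) ×ˢ (Aset n a)).filter
        (fun x => x.1.2 = e2 x.2 ∧ x.1 ≠ x.2)).card
      ≤ 2 * kStars n a 3 := by
  classical
  have htarget : ((starTarget n a 3) ×ˢ (Finset.univ : Finset Bool)).card
      = 2 * kStars n a 3 := by
    rw [Finset.card_product, card_starTarget]
    simp [mul_comm]
  rw [← htarget]
  apply Finset.card_le_card_of_injOn (fun x =>
    ((⟨x.1.2.1.2, {x.2.2.1.1, x.1.2.1.1, x.1.1}⟩ :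
        (_ : Fin n) × Finset (Fin n)), true))
  · intro x hx
    simp only [Finset.mem_coe] at hx ⊢
    simp only [Finset.mem_filter, Finset.mem_product] at hx
    obtain ⟨⟨hxA, hxB⟩, he, hne⟩ := hx
    obtain ⟨hkA, haA1, haA2⟩ := mem_Aset.mp hxA
    obtain ⟨hkB, haB1, haB2⟩ := mem_Aset.mp hxB
    rw [e2_eq hkB] at he
    simp only [Subtype.ext_iff, Prod.ext_iff] at he
    obtain ⟨hej, hek⟩ := he
    have h1 : x.2.2.1.1 < x.1.2.1.1 := hej ▸ x.2.2.2
    have h2 : x.1.2.1.1 < x.1.1 := lt_trans x.1.2.2 hkA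
    simp only [Finset.mem_product, Finset.mem_univ, and_true]
    rw [mem_starTarget]
    refine ⟨?_, card_triple h1 h2⟩
    intro u hu
    simp only [Finset.mem_insert, Finset.mem_singleton] at hu
    rcases hu with h | h | h <;> rw [h]
    · simp only [NBors, Finset.mem_filter, Finset.mem_univ, true_and]
      rw [hek]; exact haB1
    · simp only [NBors, Finset.mem_filter, Finset.mem_univ, true_and]
      rw [hek, hej]; exact haB2
    · simp only [NBors, Finset.mem_filter, Finset.mem_univ, true_and]
      rw [hsymm]; exact haA2
  · intro x hx y hy hxy
    simp only [Finset.mem_coe, Finset.mem_filter, Finset.mem_product] at hx hy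
    obtain ⟨⟨hxA, hxB⟩, hex, hxne⟩ := hx
    obtain ⟨⟨hyA, hyB⟩, hey, hyne⟩ := hy
    obtain ⟨hkAx, -, -⟩ := mem_Aset.mp hxA
    obtain ⟨hkBx, -, -⟩ := mem_Aset.mp hxB
    obtain ⟨hkAy, -, -⟩ := mem_Aset.mp hyA
    obtain ⟨hkBy, -, -⟩ := mem_Aset.mp hyB
    rw [e2_eq hkBx] at hex
    rw [e2_eq hkBy] at hey
    simp only [Subtype.ext_iff, Prod.ext_iff] at hex hey
    obtain ⟨hejx, hekx⟩ := hex
    obtain ⟨hejy, heky⟩ := hey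
    simp only [Prod.mk.injEq, Sigma.mk.inj_iff, heq_eq_eq, and_true] at hxy
    obtain ⟨hk, hset⟩ := hxy
    obtain ⟨hjb, hja, hi⟩ := triple_eq
      (hejx ▸ x.2.2.2) (lt_trans x.1.2.2 hkAx)
      (hejy ▸ y.2.2.2) (lt_trans y.1.2.2 hkAy) hset
    refine Prod.ext (eq_of_eq_parts hi hja hk)
      (eq_of_eq_parts (hekx.symm.trans (hk.trans heky)) hjb
        (hejx.symm.trans (hja.trans hejy)))

lemma card_D4 (hsymm : ∀ i j, a i j = a j i) :
    (((Aset n a) ×ˢ (Aset n a)).filter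
        (fun x => e2 x.1 = x.2.2 ∧ x.1 ≠ x.2)).card
      ≤ 2 * kStars n a 3 := by
  classical
  have htarget : ((starTarget n a 3) ×ˢ (Finset.univ : Finset Bool)).card
      = 2 * kStars n a 3 := by
    rw [Finset.card_product, card_starTarget]
    simp [mul_comm]
  rw [← htarget]
  apply Finset.card_le_card_of_injOn (fun x =>
    ((⟨x.1.1, {x.1.2.1.1, x.1.2.1.2, x.2.1}⟩ :
        (_ : Fin n) × Finset (Fin n)), true))
  · intro x hx
    simp only [Finset.mem_coe] at hx ⊢
    simp only [Finset.mem_filter, Finset.mem_product] at hx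
    obtain ⟨⟨hxA, hxB⟩, he, hne⟩ := hx
    obtain ⟨hkA, haA1, haA2⟩ := mem_Aset.mp hxA
    obtain ⟨hkB, haB1, haB2⟩ := mem_Aset.mp hxB
    rw [e2_eq hkA] at he
    simp only [Subtype.ext_iff, Prod.ext_iff] at he
    obtain ⟨hej, hek⟩ := he
    have h1 : x.1.2.1.1 < x.1.2.1.2 := x.1.2.2
    have h2 : x.1.2.1.2 < x.2.1 := lt_trans hkA (hek ▸ hkB)
    simp only [Finset.mem_product, Finset.mem_univ, and_true]
    rw [mem_starTarget]
    refine ⟨?_, card_triple h1 h2⟩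
    intro u hu
    simp only [Finset.mem_insert, Finset.mem_singleton] at hu
    rcases hu with h | h | h <;> rw [h]
    · simp only [NBors, Finset.mem_filter, Finset.mem_univ, true_and]
      exact haA1
    · simp only [NBors, Finset.mem_filter, Finset.mem_univ, true_and]
      exact haA2
    · simp only [NBors, Finset.mem_filter, Finset.mem_univ, true_and]
      rw [hsymm]
      rw [hek]; exact haB2
  · intro x hx y hy hxy
    simp only [Finset.mem_coe, Finset.mem_filter, Finset.mem_product] at hx hy
    obtain ⟨⟨hxA, hxB⟩, hex, hxne⟩ := hx
    obtain ⟨⟨hyA, hyB⟩, hey, hyne⟩ := hy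
    obtain ⟨hkAx, -, -⟩ := mem_Aset.mp hxA
    obtain ⟨hkAy, -, -⟩ := mem_Aset.mp hyA
    rw [e2_eq hkAx] at hex
    rw [e2_eq hkAy] at hey
    simp only [Subtype.ext_iff, Prod.ext_iff] at hex hey
    obtain ⟨hejx, hekx⟩ := hex
    obtain ⟨hejy, heky⟩ := hey
    simp only [Prod.mk.injEq, Sigma.mk.inj_iff, heq_eq_eq, and_true] at hxy
    obtain ⟨hi, hset⟩ := hxy
    obtain ⟨hkBx, -, -⟩ := mem_Aset.mp hxB
    obtain ⟨hkBy, -, -⟩ := mem_Aset.mp hyB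
    obtain ⟨hja, hka, hib⟩ := triple_eq
      x.1.2.2 (lt_trans hkAx (hekx ▸ hkBx))
      y.1.2.2 (lt_trans hkAy (heky ▸ hkBy)) hset
    refine Prod.ext (eq_of_eq_parts hi hja hka)
      (eq_of_eq_parts hib (hejx.symm.trans (hka.trans hejy))
        (hekx.symm.trans (hi.trans heky)))

lemma count_off (hsymm : ∀ i j, a i j = a j i) :
    (((Aset n a) ×ˢ (Aset n a)).filter
        (fun x => ¬ Disjoint (Eset x.1) (Eset x.2) ∧ x.1 ≠ x.2)).card
      ≤ 2 * fourCycles n a + 6 * kStars n a 3 := by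
  classical
  set AA := (Aset n a) ×ˢ (Aset n a) with hAA
  have hsub : AA.filter (fun x => ¬ Disjoint (Eset x.1) (Eset x.2) ∧ x.1 ≠ x.2)
      ⊆ (AA.filter (fun x => x.1.2 = x.2.2 ∧ x.1 ≠ x.2))
        ∪ ((AA.filter (fun x => e2 x.1 = e2 x.2 ∧ x.1 ≠ x.2))
        ∪ ((AA.filter (fun x => x.1.2 = e2 x.2 ∧ x.1 ≠ x.2))
        ∪ (AA.filter (fun x => e2 x.1 = x.2.2 ∧ x.1 ≠ x.2)))) := by
    intro x hx
    simp only [Finset.mem_filter] at hx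
    obtain ⟨hmem, hnd, hne⟩ := hx
    obtain ⟨e, he1, he2⟩ := Finset.not_disjoint_iff.mp hnd
    simp only [Eset, Finset.mem_insert, Finset.mem_singleton] at he1 he2
    simp only [Finset.mem_union, Finset.mem_filter]
    rcases he1 with h1 | h1 <;> rcases he2 with h2 | h2
    · exact Or.inl ⟨hmem, h1.symm.trans h2, hne⟩
    · exact Or.inr (Or.inr (Or.inl ⟨hmem, h1.symm.trans h2, hne⟩))
    · exact Or.inr (Or.inr (Or.inr ⟨hmem, h1.symm.trans h2, hne⟩))
    · exact Or.inr (Or.inl ⟨hmem, h1.symm.trans h2, hne⟩)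
  have hb1 := card_D1 (a := a) hsymm
  have hb2 := card_D2 (a := a)
  have hb3 := card_D3 (a := a) hsymm
  have hb4 := card_D4 (a := a) hsymm
  rw [← hAA] at hb1 hb2 hb3 hb4
  have h := Finset.card_le_card hsub
  have hu1 := Finset.card_union_le
    (AA.filter (fun x => x.1.2 = x.2.2 ∧ x.1 ≠ x.2))
    ((AA.filter (fun x => e2 x.1 = e2 x.2 ∧ x.1 ≠ x.2))
      ∪ ((AA.filter (fun x => x.1.2 = e2 x.2 ∧ x.1 ≠ x.2))
      ∪ (AA.filter (fun x => e2 x.1 = x.2.2 ∧ x.1 ≠ x.2))))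
  have hu2 := Finset.card_union_le
    (AA.filter (fun x => e2 x.1 = e2 x.2 ∧ x.1 ≠ x.2))
    ((AA.filter (fun x => x.1.2 = e2 x.2 ∧ x.1 ≠ x.2))
      ∪ (AA.filter (fun x => e2 x.1 = x.2.2 ∧ x.1 ≠ x.2)))
  have hu3 := Finset.card_union_le
    (AA.filter (fun x => x.1.2 = e2 x.2 ∧ x.1 ≠ x.2))
    (AA.filter (fun x => e2 x.1 = x.2.2 ∧ x.1 ≠ x.2))
  omega

end ARV

/-- Variance bound for `ARROneNS`:
`Var[Σᵢ wᵢ] ≤ 2 C₄ μ³ + 6 S₃ μ³ + S₂ μ²`. -/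
theorem arronens_variance_le (n : ℕ) (a : Fin n → Fin n → Bool)
    (hsymm : ∀ i j, a i j = a j i) (hirrefl : ∀ i, a i i = false)
    (μ ρ : ℝ) (hμ0 : 0 ≤ μ) (hμ1 : μ ≤ 1) (hρ0 : 0 ≤ ρ) (hρ1 : ρ ≤ 1) :
    (∑ E' : OPair n → Bool,
        confProb n a μ ρ E' *
          (wSumOne n a μ ρ E'
            - ∑ E'' : OPair n → Bool,
                confProb n a μ ρ E'' * wSumOne n a μ ρ E'') ^ 2)
      ≤ 2 * (fourCycles n a : ℝ) * μ ^ 3 + 6 * (kStars n a 3 : ℝ) * μ ^ 3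
        + (kStars n a 2 : ℝ) * μ ^ 2 := by
  classical
  rw [ARV.var_eq a μ ρ, ← Finset.sum_product']
  have hq2 : (0:ℝ) ≤ μ ^ 2 := pow_nonneg hμ0 2
  have hq3 : (0:ℝ) ≤ μ ^ 3 := pow_nonneg hμ0 3
  set AA := ARV.Aset n a ×ˢ ARV.Aset n a with hAA
  set pd : (Fin n × OPair n) × (Fin n × OPair n) → Prop :=
    fun x => ¬ Disjoint (ARV.Eset x.1) (ARV.Eset x.2) with hpd
  rw [← Finset.sum_filter_add_sum_filter_not AA pd]
  have hzero : ∑ x ∈ AA.filter (fun x => ¬ pd x), ARV.cov n a μ ρ x.1 x.2 = 0 := by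
    refine Finset.sum_eq_zero fun x hx => ?_
    simp only [Finset.mem_filter, hpd, not_not] at hx
    exact ARV.cov_of_disjoint (Finset.mem_product.mp hx.1).1
      (Finset.mem_product.mp hx.1).2 hx.2
  rw [hzero, add_zero]
  rw [← Finset.sum_filter_add_sum_filter_not (AA.filter pd) (fun x => x.1 = x.2)]
  have hdiag : ∑ x ∈ (AA.filter pd).filter (fun x => x.1 = x.2),
      ARV.cov n a μ ρ x.1 x.2 ≤ (kStars n a 2 : ℝ) * μ ^ 2 := by
    have hb : ∀ x ∈ (AA.filter pd).filter (fun x => x.1 = x.2),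
        ARV.cov n a μ ρ x.1 x.2 ≤ μ ^ 2 := by
      intro x hx
      simp only [Finset.mem_filter] at hx
      obtain ⟨⟨hmem, -⟩, hdg⟩ := hx
      rw [← hdg]
      exact ARV.cov_le_sq hμ0 hρ0 hρ1 (Finset.mem_product.mp hmem).1
    calc ∑ x ∈ (AA.filter pd).filter (fun x => x.1 = x.2), ARV.cov n a μ ρ x.1 x.2
        ≤ ∑ _x ∈ (AA.filter pd).filter (fun x => x.1 = x.2), μ ^ 2 :=
          Finset.sum_le_sum hb
      _ = (((AA.filter pd).filter (fun x => x.1 = x.2)).card : ℝ) * μ ^ 2 := by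
          rw [Finset.sum_const, nsmul_eq_mul]
      _ ≤ (kStars n a 2 : ℝ) * μ ^ 2 := by
          refine mul_le_mul_of_nonneg_right ?_ hq2
          have hcard : ((AA.filter pd).filter (fun x => x.1 = x.2)).card
              ≤ (ARV.Aset n a).card := by
            apply Finset.card_le_card_of_injOn Prod.fst
            · intro x hx
              simp only [Finset.mem_coe, Finset.mem_filter] at hx
              exact (Finset.mem_product.mp hx.1.1).1
            · intro x hx y hy hxy
              simp only [Finset.mem_coe, Finset.mem_filter] at hx hy
              exact Prod.ext hxy ((hx.2.symm.trans hxy).trans hy.2)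
          exact_mod_cast Nat.cast_le.mpr (le_trans hcard (ARV.card_Aset_le a))
  have hoff : ∑ x ∈ (AA.filter pd).filter (fun x => ¬ x.1 = x.2),
      ARV.cov n a μ ρ x.1 x.2
      ≤ ((2 * fourCycles n a + 6 * kStars n a 3 : ℕ) : ℝ) * μ ^ 3 := by
    have hb : ∀ x ∈ (AA.filter pd).filter (fun x => ¬ x.1 = x.2),
        ARV.cov n a μ ρ x.1 x.2 ≤ μ ^ 3 := by
      intro x hx
      simp only [Finset.mem_filter] at hx
      obtain ⟨⟨hmem, -⟩, hne⟩ := hx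
      exact ARV.cov_le_cube hμ0 hμ1 hρ0 hρ1 (Finset.mem_product.mp hmem).1
        (Finset.mem_product.mp hmem).2 hne
    calc ∑ x ∈ (AA.filter pd).filter (fun x => ¬ x.1 = x.2), ARV.cov n a μ ρ x.1 x.2
        ≤ ∑ _x ∈ (AA.filter pd).filter (fun x => ¬ x.1 = x.2), μ ^ 3 :=
          Finset.sum_le_sum hb
      _ = ((((AA.filter pd)).filter (fun x => ¬ x.1 = x.2)).card : ℝ) * μ ^ 3 := by
          rw [Finset.sum_const, nsmul_eq_mul]
      _ ≤ ((2 * fourCycles n a + 6 * kStars n a 3 : ℕ) : ℝ) * μ ^ 3 := by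
          refine mul_le_mul_of_nonneg_right ?_ hq3
          rw [Finset.filter_filter]
          exact Nat.cast_le.mpr (ARV.count_off hsymm)
  refine le_trans (add_le_add hdiag hoff) ?_
  push_cast
  nlinarith [hq2, hq3]
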